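/- Minimax realizable lower bound for apple tasting: for any hypothesis class H ⊆ {0,1}^X and any randomized apple tasting learner A, there is a realizable stream of length T on which A makes at least (1/8)·sup_{w∈ℕ} √(min{w, L(H), T} · min{AL_w(H), T}) expected mistakes. -/

import Mathlib

open scoped ENNReal NNReal


/-- `ALShatter H w d` : the hypothesis class `H` shatters some Apple Littlestone tree of
width `w` and depth `d`. Width `0` means the path has already ended (took the maximal
number of right/1 edges), in which case shattering only requires a consistent hypothesis. -/
def ALShatter {X : Type*} : Set (X → Bool) → ℕ → ℕ → Prop
  | H, _, 0 => H.Nonempty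
  | H, 0, _ + 1 => H.Nonempty
  | H, w + 1, d + 1 =>
      ∃ x : X, ALShatter {h | h ∈ H ∧ h x = false} (w + 1) d ∧
               ALShatter {h | h ∈ H ∧ h x = true} w d

/-- The Apple Littlestone dimension of `H` at width `w`. -/
noncomputable def ALdim {X : Type*} (H : Set (X → Bool)) (w : ℕ) : ℕ∞ :=
  sSup {d : ℕ∞ | ∃ n : ℕ, ALShatter H w n ∧ d = (n : ℕ∞)}

/-- `LShatter H d` : `H` shatters some Littlestone tree of depth `d`. -/
def LShatter {X : Type*} : Set (X → Bool) → ℕ → Prop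
  | H, 0 => H.Nonempty
  | H, d + 1 =>
      ∃ x : X, LShatter {h | h ∈ H ∧ h x = false} d ∧
               LShatter {h | h ∈ H ∧ h x = true} d

/-- The Littlestone dimension of `H`. -/
noncomputable def Ldim {X : Type*} (H : Set (X → Bool)) : ℕ∞ :=
  sSup {d : ℕ∞ | ∃ n : ℕ, LShatter H n ∧ d = (n : ℕ∞)}

/-- The Effective width of `H`: the least width `w ≥ 1` at which the
Apple Littlestone dimension is finite. -/
noncomputable def EffW {X : Type*} (H : Set (X → Bool)) : ℕ∞ :=
  sInf {w : ℕ∞ | ∃ n : ℕ, 1 ≤ n ∧ ALdim H n ≠ ⊤ ∧ w = (n : ℕ∞)}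
/-- One run of a randomized apple-tasting learner `A` (a map from the apple-tasting
history — past instances together with the label if it was observed — and the current
instance, to a distribution over predictions) on the stream `x` with true labels `y`:
the distribution, after `t` rounds, of the pair (history, number of mistakes so far).
The label `y t` is recorded (observed) only when the prediction is 1. -/
noncomputable def runAT {X : Type*} (A : List (X × Option Bool) → X → PMF Bool)
    (x : ℕ → X) (y : ℕ → Bool) : ℕ → PMF (List (X × Option Bool) × ℕ)
  | 0 => PMF.pure ([], 0)
  | t + 1 =>
      (runAT A x y t).bind fun s =>
        (A s.1 (x t)).bind fun b =>
          PMF.pure (s.1 ++ [(x t, if b then some (y t) else none)],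
            s.2 + (if b ≠ y t then 1 else 0))

/-- Expected number of mistakes of the randomized apple-tasting learner `A` over `T`
rounds on the stream `x` with true labels `y`. -/
noncomputable def expMistakes {X : Type*} (A : List (X × Option Bool) → X → PMF Bool)
    (x : ℕ → X) (y : ℕ → Bool) (T : ℕ) : ℝ≥0∞ :=
  ∑' s : List (X × Option Bool) × ℕ, runAT A x y T s * s.2

namespace ATLB

variable {X : Type*}

/-! ### Expectation helpers -/

noncomputable def Ex {α : Type*} (p : PMF α) (f : α → ℝ≥0∞) : ℝ≥0∞ := ∑' a, p a * f a

lemma Ex_pure {α : Type*} (a : α) (f : α → ℝ≥0∞) : Ex (PMF.pure a) f = f a := by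
  unfold Ex
  rw [tsum_eq_single a]
  · simp
  · intro b hb; simp [PMF.pure_apply, hb]

lemma Ex_bind {α β : Type*} (p : PMF α) (g : α → PMF β) (f : β → ℝ≥0∞) :
    Ex (p.bind g) f = Ex p (fun a => Ex (g a) f) := by
  unfold Ex
  simp only [PMF.bind_apply]
  calc ∑' b, (∑' a, p a * (g a) b) * f b
      = ∑' b, ∑' a, p a * ((g a) b * f b) := by
        congr 1; funext b; rw [← ENNReal.tsum_mul_right]; congr 1; funext a; ring
    _ = ∑' a, ∑' b, p a * ((g a) b * f b) := ENNReal.tsum_comm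
    _ = ∑' a, p a * ∑' b, (g a) b * f b := by
        congr 1; funext a; rw [ENNReal.tsum_mul_left]

lemma Ex_mono_support {α : Type*} {p : PMF α} {f g : α → ℝ≥0∞}
    (h : ∀ a ∈ p.support, f a ≤ g a) : Ex p f ≤ Ex p g := by
  refine ENNReal.tsum_le_tsum (fun a => ?_)
  by_cases hp : p a = 0
  · simp [hp]
  · exact mul_le_mul_right (h a ((PMF.mem_support_iff p a).2 hp)) _

lemma Ex_const {α : Type*} (p : PMF α) (c : ℝ≥0∞) : Ex p (fun _ => c) = c := by
  unfold Ex
  rw [ENNReal.tsum_mul_right, PMF.tsum_coe, one_mul]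

lemma Ex_add {α : Type*} (p : PMF α) (f g : α → ℝ≥0∞) :
    Ex p (fun a => f a + g a) = Ex p f + Ex p g := by
  unfold Ex
  rw [← ENNReal.tsum_add]; congr 1; funext a; ring

lemma Ex_add_const {α : Type*} (p : PMF α) (c : ℝ≥0∞) (f : α → ℝ≥0∞) :
    Ex p (fun a => c + f a) = c + Ex p f := by
  rw [Ex_add, Ex_const]

lemma Ex_indicator {α : Type*} (p : PMF α) [DecidableEq α] (a₀ : α) (c : ℝ≥0∞) :
    Ex p (fun a => if a = a₀ then c else 0) = p a₀ * c := by
  unfold Ex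
  rw [tsum_eq_single a₀]
  · simp
  · intro b hb; simp [hb]

lemma Ex_mul_const {α : Type*} (p : PMF α) (c : ℝ≥0∞) (f : α → ℝ≥0∞) :
    Ex p (fun a => f a * c) = Ex p f * c := by
  unfold Ex
  rw [← ENNReal.tsum_mul_right]; congr 1; funext a; ring

lemma Ex_sum {α β : Type*} (p : PMF α) (s : Finset β) (f : β → α → ℝ≥0∞) :
    Ex p (fun a => ∑ b ∈ s, f b a) = ∑ b ∈ s, Ex p (f b) := by
  classical
  induction s using Finset.induction with
  | empty => simp [Ex_const]
  | insert a s hb ih =>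
      simp only [Finset.sum_insert hb]
      rw [Ex_add, ih]

/-! ### runFrom -/

noncomputable def runFrom (A : List (X × Option Bool) → X → PMF Bool)
    (x : ℕ → X) (y : ℕ → Bool) (st : List (X × Option Bool) × ℕ) :
    ℕ → PMF (List (X × Option Bool) × ℕ)
  | 0 => PMF.pure st
  | t + 1 =>
      (runFrom A x y st t).bind fun s =>
        (A s.1 (x t)).bind fun b =>
          PMF.pure (s.1 ++ [(x t, if b then some (y t) else none)],
            s.2 + (if b ≠ y t then 1 else 0))

lemma runAT_eq_runFrom (A : List (X × Option Bool) → X → PMF Bool)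
    (x : ℕ → X) (y : ℕ → Bool) (n : ℕ) :
    runAT A x y n = runFrom A x y ([], 0) n := by
  induction n with
  | zero => rfl
  | succ t ih => rw [runAT, runFrom, ih]

lemma runFrom_congr (A : List (X × Option Bool) → X → PMF Bool)
    {x x' : ℕ → X} {y y' : ℕ → Bool} (st : List (X × Option Bool) × ℕ) (c : ℕ)
    (hx : ∀ t < c, x t = x' t) (hy : ∀ t < c, y t = y' t) :
    runFrom A x y st c = runFrom A x' y' st c := by
  induction c with
  | zero => rfl
  | succ t ih =>
      rw [runFrom, runFrom, ih (fun u hu => hx u (by omega)) (fun u hu => hy u (by omega)),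
        hx t (by omega), hy t (by omega)]

lemma runFrom_add (A : List (X × Option Bool) → X → PMF Bool)
    (x : ℕ → X) (y : ℕ → Bool) (st : List (X × Option Bool) × ℕ) (a b : ℕ) :
    runFrom A x y st (a + b) =
      (runFrom A x y st a).bind
        (fun s => runFrom A (fun t => x (a + t)) (fun t => y (a + t)) s b) := by
  induction b with
  | zero => simp [runFrom, PMF.bind_pure]
  | succ b ih =>
      show runFrom A x y st (a + b + 1) = _
      rw [runFrom, ih, PMF.bind_bind]
      rfl

lemma support_count_le (A : List (X × Option Bool) → X → PMF Bool)
    (x : ℕ → X) (y : ℕ → Bool) (st : List (X × Option Bool) × ℕ) (c : ℕ) :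
    ∀ s' ∈ (runFrom A x y st c).support, st.2 ≤ s'.2 := by
  induction c with
  | zero =>
      intro s' hs'
      rw [runFrom, PMF.support_pure] at hs'
      simp only [Set.mem_singleton_iff] at hs'
      subst hs'; exact le_rfl
  | succ t ih =>
      intro s' hs'
      rw [runFrom, PMF.support_bind] at hs'
      simp only [Set.mem_iUnion] at hs'
      obtain ⟨a, ha, hs'⟩ := hs'
      rw [PMF.support_bind] at hs'
      simp only [Set.mem_iUnion] at hs'
      obtain ⟨b, _, hs'⟩ := hs'
      rw [PMF.support_pure] at hs'
      simp only [Set.mem_singleton_iff] at hs'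
      subst hs'
      have := ih a ha
      simp only
      exact le_trans this (Nat.le_add_right _ _)

lemma Ex_count_ge (A : List (X × Option Bool) → X → PMF Bool)
    (x : ℕ → X) (y : ℕ → Bool) (st : List (X × Option Bool) × ℕ) (c : ℕ) :
    (st.2 : ℝ≥0∞) ≤ Ex (runFrom A x y st c) (fun s' => (s'.2 : ℝ≥0∞)) := by
  have := Ex_mono_support (p := runFrom A x y st c)
    (f := fun _ => (st.2 : ℝ≥0∞)) (g := fun s' => (s'.2 : ℝ≥0∞))
    (fun a ha => by exact_mod_cast Nat.cast_le.2 (support_count_le A x y st c a ha))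
  rwa [Ex_const] at this

end ATLB
namespace ATLB
variable {X : Type*}

/-! ### Shattering combinatorics -/

lemma alsh0 {H : Set (X → Bool)} {w : ℕ} (h : ALShatter H w 0) : H.Nonempty := by
  cases w <;> exact h

lemma alsh0' {H : Set (X → Bool)} {w : ℕ} (h : H.Nonempty) : ALShatter H w 0 := by
  cases w <;> exact h

lemma alshS {H : Set (X → Bool)} {w d : ℕ} (h : ALShatter H (w+1) (d+1)) :
    ∃ x : X, ALShatter {h | h ∈ H ∧ h x = false} (w + 1) d ∧
             ALShatter {h | h ∈ H ∧ h x = true} w d := h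

lemma alsh_nonempty : ∀ (d : ℕ) (H : Set (X → Bool)) (w : ℕ),
    ALShatter H w d → H.Nonempty := by
  intro d
  induction d with
  | zero => intro H w h; exact alsh0 h
  | succ d ih =>
      intro H w h
      cases w with
      | zero => exact h
      | succ w =>
          obtain ⟨x, hL, _⟩ := alshS h
          obtain ⟨g, hg⟩ := ih _ _ hL
          have hg' : g ∈ H ∧ g x = false := hg
          exact ⟨g, hg'.1⟩

lemma alsh_mono_depth : ∀ (d : ℕ) (H : Set (X → Bool)) (w d' : ℕ), d' ≤ d →
    ALShatter H w d → ALShatter H w d' := by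
  intro d
  induction d with
  | zero => intro H w d' hd h; rw [Nat.le_zero.1 hd]; exact h
  | succ d ih =>
      intro H w d' hd h
      cases w with
      | zero =>
          cases d' with
          | zero => exact alsh0' (alsh_nonempty _ _ _ h)
          | succ d'' => exact h
      | succ w =>
          cases d' with
          | zero => exact alsh0' (alsh_nonempty _ _ _ h)
          | succ d'' =>
              obtain ⟨x, hL, hR⟩ := alshS h
              exact ⟨x, ih _ _ _ (by omega) hL, ih _ _ _ (by omega) hR⟩

lemma alsh_mono_width_succ : ∀ (d : ℕ) (H : Set (X → Bool)) (w : ℕ),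
    ALShatter H (w+1) d → ALShatter H w d := by
  intro d
  induction d with
  | zero => intro H w h; exact alsh0' (alsh0 h)
  | succ d ih =>
      intro H w h
      cases w with
      | zero => exact alsh_nonempty _ _ _ h
      | succ w =>
          obtain ⟨x, hL, hR⟩ := alshS h
          exact ⟨x, ih _ _ hL, ih _ _ hR⟩

lemma alsh_mono_width {H : Set (X → Bool)} {d : ℕ} :
    ∀ (w w' : ℕ), w' ≤ w → ALShatter H w d → ALShatter H w' d := by
  intro w
  induction w with
  | zero => intro w' hw h; rw [Nat.le_zero.1 hw]; exact h
  | succ w ih =>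
      intro w' hw h
      rcases Nat.eq_or_lt_of_le hw with rfl | hlt
      · exact h
      · exact ih _ (by omega) (alsh_mono_width_succ _ _ _ h)

lemma lsh_nonempty : ∀ (d : ℕ) (H : Set (X → Bool)), LShatter H d → H.Nonempty := by
  intro d
  induction d with
  | zero => intro H h; exact h
  | succ d ih =>
      intro H h
      obtain ⟨x, hL, _⟩ := h
      obtain ⟨g, hg⟩ := ih _ hL
      have hg' : g ∈ H ∧ g x = false := hg
      exact ⟨g, hg'.1⟩

lemma lsh_mono_depth : ∀ (d : ℕ) (H : Set (X → Bool)) (d' : ℕ), d' ≤ d →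
    LShatter H d → LShatter H d' := by
  intro d
  induction d with
  | zero => intro H d' hd h; rw [Nat.le_zero.1 hd]; exact h
  | succ d ih =>
      intro H d' hd h
      cases d' with
      | zero => exact lsh_nonempty _ _ h
      | succ d'' =>
          obtain ⟨x, hL, hR⟩ := h
          exact ⟨x, ih _ _ (by omega) hL, ih _ _ (by omega) hR⟩

lemma lsh_to_alsh : ∀ (d : ℕ) (H : Set (X → Bool)) (w : ℕ),
    LShatter H d → ALShatter H w d := by
  intro d
  induction d with
  | zero => intro H w h; exact alsh0' h
  | succ d ih =>
      intro H w h
      cases w with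
      | zero => exact lsh_nonempty _ _ h
      | succ w =>
          obtain ⟨x, hL, hR⟩ := h
          exact ⟨x, ih _ _ hL, ih _ _ hR⟩

lemma alsh_of_le_aldim {H : Set (X → Bool)} {w n : ℕ} (hn : 1 ≤ n)
    (h : (n : ℕ∞) ≤ ALdim H w) : ALShatter H w n := by
  by_contra hno
  have hub : ALdim H w ≤ ((n - 1 : ℕ) : ℕ∞) := by
    apply sSup_le
    rintro d ⟨n', hsh, rfl⟩
    have hn' : n' ≤ n - 1 := by
      by_contra hgt
      exact hno (alsh_mono_depth _ _ _ _ (by omega) hsh)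
    exact_mod_cast hn'
  have h2 : (n : ℕ∞) ≤ ((n - 1 : ℕ) : ℕ∞) := le_trans h hub
  have h3 := (Nat.cast_le (α := ℕ∞)).1 h2
  omega

lemma lsh_of_le_ldim {H : Set (X → Bool)} {n : ℕ} (hn : 1 ≤ n)
    (h : (n : ℕ∞) ≤ Ldim H) : LShatter H n := by
  by_contra hno
  have hub : Ldim H ≤ ((n - 1 : ℕ) : ℕ∞) := by
    apply sSup_le
    rintro d ⟨n', hsh, rfl⟩
    have hn' : n' ≤ n - 1 := by
      by_contra hgt
      exact hno (lsh_mono_depth _ _ _ (by omega) hsh)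
    exact_mod_cast hn'
  have h2 : (n : ℕ∞) ≤ ((n - 1 : ℕ) : ℕ∞) := le_trans h hub
  have h3 := (Nat.cast_le (α := ℕ∞)).1 h2
  omega

lemma le_aldim {H : Set (X → Bool)} {w n : ℕ} (h : ALShatter H w n) :
    (n : ℕ∞) ≤ ALdim H w := le_sSup ⟨n, h, rfl⟩

end ATLB
namespace ATLB
variable {X : Type*}

/-! ### Block analysis -/

lemma snoc_inj {α : Type*} {l₁ l₂ : List α} {a b : α} (h : l₁ ++ [a] = l₂ ++ [b]) :
    l₁ = l₂ ∧ a = b := by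
  have h' := congrArg List.reverse h
  simp only [List.reverse_append, List.reverse_singleton, List.singleton_append] at h'
  injection h' with h1 h2
  exact ⟨List.reverse_injective h2, h1⟩

lemma atom_prob_true (A : List (X × Option Bool) → X → PMF Bool) (xr : X)
    (st : List (X × Option Bool) × ℕ) :
    ∀ c : ℕ,
      runFrom A (fun _ => xr) (fun _ => true) st c
          (st.1 ++ List.replicate c (xr, none), st.2 + c)
        = ∏ j ∈ Finset.range c, (A (st.1 ++ List.replicate j (xr, none)) xr) false := by
  intro c
  induction c with
  | zero => simp [runFrom, PMF.pure_apply]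
  | succ c ih =>
      rw [runFrom, PMF.bind_apply]
      rw [tsum_eq_single ((st.1 ++ List.replicate c (xr, none), st.2 + c) :
        List (X × Option Bool) × ℕ)]
      · rw [ih, Finset.prod_range_succ]
        congr 1
        rw [PMF.bind_apply, tsum_bool]
        simp only [PMF.pure_apply]
        norm_num
        intro hcon
        exact absurd (by omega : st.2 + (c + 1) = st.2 + c + 1)
          (hcon (by rw [List.replicate_succ']))
      · intro s' hne
        refine mul_eq_zero.2 (Or.inr ?_)
        rw [PMF.bind_apply]
        refine ENNReal.tsum_eq_zero.2 (fun b => mul_eq_zero.2 (Or.inr ?_))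
        rw [PMF.pure_apply, if_neg]
        intro hcon
        rw [Prod.ext_iff] at hcon
        obtain ⟨h1, h2⟩ := hcon
        rw [List.replicate_succ', ← List.append_assoc] at h1
        obtain ⟨hl, he⟩ := snoc_inj h1
        have hb : b = false := by
          cases b
          · rfl
          · exfalso; simp at he
        subst hb
        apply hne
        rw [Prod.ext_iff]
        refine ⟨hl.symm, ?_⟩
        norm_num at h2
        simp only
        omega

lemma atom_prob_false (A : List (X × Option Bool) → X → PMF Bool) (xr : X)
    (st : List (X × Option Bool) × ℕ) :
    ∀ c : ℕ,
      runFrom A (fun _ => xr) (fun _ => false) st c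
          (st.1 ++ List.replicate c (xr, none), st.2)
        = ∏ j ∈ Finset.range c, (A (st.1 ++ List.replicate j (xr, none)) xr) false := by
  intro c
  induction c with
  | zero => simp [runFrom, PMF.pure_apply]
  | succ c ih =>
      rw [runFrom, PMF.bind_apply]
      rw [tsum_eq_single ((st.1 ++ List.replicate c (xr, none), st.2) :
        List (X × Option Bool) × ℕ)]
      · rw [ih, Finset.prod_range_succ]
        congr 1
        rw [PMF.bind_apply, tsum_bool]
        simp only [PMF.pure_apply]
        norm_num
        intro hcon
        exact absurd (by rw [List.replicate_succ']) hcon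
      · intro s' hne
        refine mul_eq_zero.2 (Or.inr ?_)
        rw [PMF.bind_apply]
        refine ENNReal.tsum_eq_zero.2 (fun b => mul_eq_zero.2 (Or.inr ?_))
        rw [PMF.pure_apply, if_neg]
        intro hcon
        rw [Prod.ext_iff] at hcon
        obtain ⟨h1, h2⟩ := hcon
        rw [List.replicate_succ', ← List.append_assoc] at h1
        obtain ⟨hl, he⟩ := snoc_inj h1
        have hb : b = false := by
          cases b
          · rfl
          · exfalso; simp at he
        subst hb
        apply hne
        rw [Prod.ext_iff]
        refine ⟨hl.symm, ?_⟩
        norm_num at h2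
        simp only
        omega

lemma support_neg (A : List (X × Option Bool) → X → PMF Bool) (xr : X)
    (st : List (X × Option Bool) × ℕ) :
    ∀ c : ℕ, ∀ s' ∈ (runFrom A (fun _ => xr) (fun _ => false) st c).support,
      s' = (st.1 ++ List.replicate c (xr, none), st.2) ∨ st.2 + 1 ≤ s'.2 := by
  intro c
  induction c with
  | zero =>
      intro s' hs'
      rw [runFrom, PMF.support_pure] at hs'
      simp only [Set.mem_singleton_iff] at hs'
      subst hs'
      left; simp
  | succ c ih =>
      intro s' hs'
      rw [runFrom, PMF.support_bind] at hs'
      simp only [Set.mem_iUnion] at hs'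
      obtain ⟨a, ha, hs'⟩ := hs'
      rw [PMF.support_bind] at hs'
      simp only [Set.mem_iUnion] at hs'
      obtain ⟨b, _, hs'⟩ := hs'
      rw [PMF.support_pure] at hs'
      simp only [Set.mem_singleton_iff] at hs'
      subst hs'
      rcases ih a ha with h | h
      · subst h
        cases b
        · left
          simp [List.replicate_succ', List.append_assoc]
        · right
          simp
      · right
        simp only
        omega

lemma Ex_pos_block (A : List (X × Option Bool) → X → PMF Bool) (xr : X)
    (st : List (X × Option Bool) × ℕ) (c : ℕ) :
    (st.2 : ℝ≥0∞) + c * (∏ j ∈ Finset.range c, (A (st.1 ++ List.replicate j (xr, none)) xr) false)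
      ≤ Ex (runFrom A (fun _ => xr) (fun _ => true) st c) (fun s' => (s'.2 : ℝ≥0∞)) := by
  classical
  have hle : Ex (runFrom A (fun _ => xr) (fun _ => true) st c)
      (fun s' => (st.2 : ℝ≥0∞) +
        (if s' = ((st.1 ++ List.replicate c (xr, none), st.2 + c) : List (X × Option Bool) × ℕ)
          then (c : ℝ≥0∞) else 0))
      ≤ Ex (runFrom A (fun _ => xr) (fun _ => true) st c) (fun s' => (s'.2 : ℝ≥0∞)) := by
    apply Ex_mono_support
    intro a ha
    by_cases h : a = ((st.1 ++ List.replicate c (xr, none), st.2 + c) :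
        List (X × Option Bool) × ℕ)
    · subst h
      simp
    · simp only [if_neg h, add_zero]
      exact_mod_cast support_count_le A _ _ st c a ha
  refine le_trans (le_of_eq ?_) hle
  rw [Ex_add_const, Ex_indicator, atom_prob_true A xr st c, mul_comm]

lemma Ex_neg_block (A : List (X × Option Bool) → X → PMF Bool) (xr : X)
    (st : List (X × Option Bool) × ℕ) (c : ℕ) :
    (st.2 : ℝ≥0∞) +
        (1 - ∏ j ∈ Finset.range c, (A (st.1 ++ List.replicate j (xr, none)) xr) false)
      ≤ Ex (runFrom A (fun _ => xr) (fun _ => false) st c) (fun s' => (s'.2 : ℝ≥0∞)) := by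
  classical
  set p := runFrom A (fun _ => xr) (fun _ => false) st c with hp
  set atom : List (X × Option Bool) × ℕ := (st.1 ++ List.replicate c (xr, none), st.2)
    with hatom
  have hle : Ex p (fun s' => (st.2 : ℝ≥0∞) + (if s' = atom then 0 else 1))
      ≤ Ex p (fun s' => (s'.2 : ℝ≥0∞)) := by
    apply Ex_mono_support
    intro a ha
    rcases support_neg A xr st c a ha with h | h
    · rw [if_pos h, add_zero, h]
    · have hne : a ≠ atom := by
        intro hcon
        rw [hcon, hatom] at h
        simp at h
      rw [if_neg hne]
      calc (st.2 : ℝ≥0∞) + 1 = ((st.2 + 1 : ℕ) : ℝ≥0∞) := by push_cast; ring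
        _ ≤ (a.2 : ℝ≥0∞) := by exact_mod_cast h
  refine le_trans ?_ hle
  rw [Ex_add_const]
  apply add_le_add_right
  have h2 : Ex p (fun s' => (if s' = atom then (0:ℝ≥0∞) else 1)) +
      Ex p (fun s' => (if s' = atom then (1:ℝ≥0∞) else 0)) = 1 := by
    rw [← Ex_add]
    have he : (fun a => (if a = atom then (0:ℝ≥0∞) else 1) + (if a = atom then 1 else 0)) =
        fun _ => (1:ℝ≥0∞) := by
      funext a; by_cases h : a = atom <;> simp [h]
    rw [he, Ex_const]
  rw [Ex_indicator, mul_one] at h2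
  have hatomp : p atom = ∏ j ∈ Finset.range c,
      (A (st.1 ++ List.replicate j (xr, none)) xr) false := atom_prob_false A xr st c
  have hEx : Ex p (fun s' => (if s' = atom then (0:ℝ≥0∞) else 1)) = 1 - p atom :=
    ENNReal.eq_sub_of_add_eq (PMF.apply_ne_top p atom) h2
  rw [hEx, hatomp]

end ATLB
namespace ATLB
variable {X : Type*}

/-! ### The adversary construction -/

lemma alshZ {H : Set (X → Bool)} {d : ℕ} (h : ALShatter H 0 (d+1)) : H.Nonempty := h

noncomputable def advx {H : Set (X → Bool)} {w d : ℕ} (hsh : ALShatter H (w+1) (d+1)) : X :=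
  (alshS hsh).choose

lemma advx_specL {H : Set (X → Bool)} {w d : ℕ} (hsh : ALShatter H (w+1) (d+1)) :
    ALShatter {h | h ∈ H ∧ h (advx hsh) = false} (w+1) d :=
  (alshS hsh).choose_spec.1

lemma advx_specR {H : Set (X → Bool)} {w d : ℕ} (hsh : ALShatter H (w+1) (d+1)) :
    ALShatter {h | h ∈ H ∧ h (advx hsh) = true} w d :=
  (alshS hsh).choose_spec.2

noncomputable def adv (s : ℕ) : (d : ℕ) → (H : Set (X → Bool)) → (w : ℕ) →
    ALShatter H w d → X → (Fin d → Fin (2*s)) → (ℕ → X) × (X → Bool)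
  | 0, _H, _w, hsh, x₀, _ => (fun _ => x₀, (alsh0 hsh).choose)
  | _+1, _H, 0, hsh, x₀, _ => (fun _ => x₀, (alshZ hsh).choose)
  | d+1, H, w+1, hsh, x₀, σ =>
      if (σ 0 : ℕ) = 0 then
        (fun t => if t < s then advx hsh
            else (adv s d {h | h ∈ H ∧ h (advx hsh) = true} w (advx_specR hsh) (advx hsh)
              (σ ∘ Fin.succ)).1 (t - s),
         (adv s d {h | h ∈ H ∧ h (advx hsh) = true} w (advx_specR hsh) (advx hsh)
              (σ ∘ Fin.succ)).2)
      else
        (fun t => if t < s then advx hsh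
            else (adv s d {h | h ∈ H ∧ h (advx hsh) = false} (w+1) (advx_specL hsh) (advx hsh)
              (σ ∘ Fin.succ)).1 (t - s),
         (adv s d {h | h ∈ H ∧ h (advx hsh) = false} (w+1) (advx_specL hsh) (advx hsh)
              (σ ∘ Fin.succ)).2)

lemma adv_eq_pos (s : ℕ) {d : ℕ} {H : Set (X → Bool)} {w : ℕ}
    (hsh : ALShatter H (w+1) (d+1)) (x₀ : X) (σ : Fin (d+1) → Fin (2*s))
    (hc : (σ 0 : ℕ) = 0) :
    adv s (d+1) H (w+1) hsh x₀ σ =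
      (fun t => if t < s then advx hsh
          else (adv s d {h | h ∈ H ∧ h (advx hsh) = true} w (advx_specR hsh) (advx hsh)
            (σ ∘ Fin.succ)).1 (t - s),
       (adv s d {h | h ∈ H ∧ h (advx hsh) = true} w (advx_specR hsh) (advx hsh)
            (σ ∘ Fin.succ)).2) := by
  simp only [adv, if_pos hc]

lemma adv_eq_neg (s : ℕ) {d : ℕ} {H : Set (X → Bool)} {w : ℕ}
    (hsh : ALShatter H (w+1) (d+1)) (x₀ : X) (σ : Fin (d+1) → Fin (2*s))
    (hc : ¬ ((σ 0 : ℕ) = 0)) :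
    adv s (d+1) H (w+1) hsh x₀ σ =
      (fun t => if t < s then advx hsh
          else (adv s d {h | h ∈ H ∧ h (advx hsh) = false} (w+1) (advx_specL hsh) (advx hsh)
            (σ ∘ Fin.succ)).1 (t - s),
       (adv s d {h | h ∈ H ∧ h (advx hsh) = false} (w+1) (advx_specL hsh) (advx hsh)
            (σ ∘ Fin.succ)).2) := by
  simp only [adv, if_neg hc]

lemma adv_mem (s : ℕ) : ∀ (d : ℕ) (H : Set (X → Bool)) (w : ℕ) (hsh : ALShatter H w d)
    (x₀ : X) (σ : Fin d → Fin (2*s)), (adv s d H w hsh x₀ σ).2 ∈ H := by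
  intro d
  induction d with
  | zero =>
      intro H w hsh x₀ σ
      exact (alsh0 hsh).choose_spec
  | succ d ih =>
      intro H w hsh x₀ σ
      cases w with
      | zero => exact (alshZ hsh).choose_spec
      | succ w =>
          by_cases hc : (σ 0 : ℕ) = 0
          · rw [adv_eq_pos s hsh x₀ σ hc]
            have := ih {h | h ∈ H ∧ h (advx hsh) = true} w (advx_specR hsh) (advx hsh)
              (σ ∘ Fin.succ)
            exact this.1
          · rw [adv_eq_neg s hsh x₀ σ hc]
            have := ih {h | h ∈ H ∧ h (advx hsh) = false} (w+1) (advx_specL hsh) (advx hsh)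
              (σ ∘ Fin.succ)
            exact this.1

/-! ### Counting active blocks -/

def Nact (s : ℕ) : (d : ℕ) → (w : ℕ) → (Fin d → Fin (2*s)) → ℕ
  | 0, _, _ => 0
  | _+1, 0, _ => 0
  | d+1, w+1, σ => 1 + Nact s d (if (σ 0 : ℕ) = 0 then w else w+1) (σ ∘ Fin.succ)

lemma npos_succ (s d : ℕ) (σ : Fin (d+1) → Fin (2*s)) :
    (Finset.univ.filter (fun i => ((σ i : ℕ) = 0))).card
      = (if (σ 0 : ℕ) = 0 then 1 else 0) +
        (Finset.univ.filter (fun i => (((σ ∘ Fin.succ) i : ℕ) = 0))).card := by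
  classical
  rw [Finset.card_filter, Finset.card_filter, Fin.sum_univ_succ]
  rfl

lemma Nact_full (s : ℕ) : ∀ (d : ℕ) (w : ℕ) (σ : Fin d → Fin (2*s)),
    (Finset.univ.filter (fun i => ((σ i : ℕ) = 0))).card < w → Nact s d w σ = d := by
  intro d
  induction d with
  | zero => intro w σ _; rfl
  | succ d ih =>
      intro w σ hlt
      cases w with
      | zero => omega
      | succ w =>
          rw [Nact]
          rw [npos_succ] at hlt
          by_cases hc : (σ 0 : ℕ) = 0
          · rw [if_pos hc]
            rw [if_pos hc] at hlt
            rw [ih w (σ ∘ Fin.succ) (by omega)]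
            omega
          · rw [if_neg hc]
            rw [if_neg hc] at hlt
            rw [ih (w+1) (σ ∘ Fin.succ) (by omega)]
            omega

end ATLB
namespace ATLB

lemma cons_comp_succ {d : ℕ} {V : Type*} (c : V) (σ' : Fin d → V) :
    (Fin.cons c σ' : Fin (d+1) → V) ∘ Fin.succ = σ' :=
  funext fun i => by simp

lemma sum_cube {d : ℕ} {V : Type*} [Fintype V] [DecidableEq V] {M : Type*} [AddCommMonoid M]
    (F : (Fin (d+1) → V) → M) :
    ∑ σ : Fin (d+1) → V, F σ = ∑ c : V, ∑ σ' : Fin d → V, F (Fin.cons c σ') := by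
  rw [← Equiv.sum_comp (Fin.consEquiv (fun _ => V)) F, Fintype.sum_prod_type]
  rfl

lemma sum_npos (s : ℕ) (hs : 1 ≤ s) : ∀ B : ℕ,
    (∑ σ : Fin B → Fin (2*s), (Finset.univ.filter (fun i => ((σ i : ℕ) = 0))).card)
      = B * (2*s)^(B-1) := by
  haveI : NeZero (2*s) := ⟨by omega⟩
  intro B
  induction B with
  | zero => simp
  | succ B ihB =>
      rw [sum_cube]
      have h1 : ∀ c : Fin (2*s), ∀ σ' : Fin B → Fin (2*s),
          (Finset.univ.filter
              (fun i => (((Fin.cons c σ' : Fin (B+1) → Fin (2*s)) i : ℕ) = 0))).card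
            = (if (c:ℕ) = 0 then 1 else 0)
              + (Finset.univ.filter (fun i => ((σ' i : ℕ) = 0))).card := by
        intro c σ'
        rw [npos_succ, Fin.cons_zero, cons_comp_succ]
      calc ∑ c : Fin (2*s), ∑ σ' : Fin B → Fin (2*s),
            (Finset.univ.filter
              (fun i => (((Fin.cons c σ' : Fin (B+1) → Fin (2*s)) i : ℕ) = 0))).card
          = ∑ c : Fin (2*s), ∑ σ' : Fin B → Fin (2*s),
              ((if (c:ℕ) = 0 then 1 else 0)
                + (Finset.univ.filter (fun i => ((σ' i : ℕ) = 0))).card) := by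
            refine Finset.sum_congr rfl (fun c _ => Finset.sum_congr rfl (fun σ' _ => h1 c σ'))
        _ = ∑ c : Fin (2*s), ((2*s)^B * (if (c:ℕ) = 0 then 1 else 0) + B * (2*s)^(B-1)) := by
            refine Finset.sum_congr rfl (fun c _ => ?_)
            rw [Finset.sum_add_distrib, Finset.sum_const, ihB, Finset.card_univ,
              Fintype.card_fun, Fintype.card_fin, Fintype.card_fin, smul_eq_mul, mul_comm]
        _ = (2*s)^B * 1 + (2*s) * (B * (2*s)^(B-1)) := by
            rw [Finset.sum_add_distrib, Finset.sum_const, Finset.card_univ, Fintype.card_fin,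
              smul_eq_mul, ← Finset.mul_sum]
            congr 2
            calc (∑ c : Fin (2*s), if (c:ℕ) = 0 then 1 else 0)
                = ∑ c : Fin (2*s), if c = 0 then 1 else 0 := by
                  refine Finset.sum_congr rfl (fun c _ => ?_)
                  by_cases h : c = 0
                  · subst h; simp
                  · rw [if_neg h, if_neg (fun hc => h (Fin.ext (by simpa using hc)))]
              _ = 1 := by rw [Finset.sum_ite_eq' Finset.univ 0 (fun _ => 1)]; simp
        _ = (B+1) * (2*s)^(B+1-1) := by
            cases B with
            | zero => simp
            | succ B' =>
                have e1 : (2*s) * ((B'+1) * (2*s)^(B'+1-1)) = (B'+1) * (2*s)^(B'+1) := by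
                  simp only [Nat.add_sub_cancel]
                  ring
                rw [e1]
                simp only [Nat.add_sub_cancel]
                ring

lemma sum_Nact_ge (s k : ℕ) (hs : 1 ≤ s) (hk : 1 ≤ k) :
    (k*s) * (s * (2*s)^(k*s-1)) ≤ ∑ σ : Fin (k*s) → Fin (2*s), Nact s (k*s) k σ := by
  classical
  set B := k*s with hB
  have hB1 : 1 ≤ B := by
    rw [hB]; exact Nat.one_le_iff_ne_zero.2 (by positivity)
  set good : Finset (Fin B → Fin (2*s)) :=
    Finset.univ.filter (fun σ => (Finset.univ.filter (fun i => ((σ i : ℕ) = 0))).card < k)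
    with hgood
  set bad : Finset (Fin B → Fin (2*s)) :=
    Finset.univ.filter (fun σ => ¬ ((Finset.univ.filter (fun i => ((σ i : ℕ) = 0))).card < k))
    with hbad
  have hbadcard : bad.card * k ≤ B * (2*s)^(B-1) := by
    have h1 : bad.card • k ≤ ∑ σ ∈ bad, (Finset.univ.filter (fun i => ((σ i : ℕ) = 0))).card := by
      refine Finset.card_nsmul_le_sum bad _ k (fun σ hσ => ?_)
      rw [hbad, Finset.mem_filter] at hσ
      omega
    have h2 : (∑ σ ∈ bad, (Finset.univ.filter (fun i => ((σ i : ℕ) = 0))).card)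
        ≤ ∑ σ : Fin B → Fin (2*s), (Finset.univ.filter (fun i => ((σ i : ℕ) = 0))).card :=
      Finset.sum_le_sum_of_subset (Finset.filter_subset _ _)
    rw [smul_eq_mul] at h1
    calc bad.card * k = bad.card • k := by rw [smul_eq_mul]
      _ ≤ _ := h1
      _ ≤ _ := h2
      _ = B * (2*s)^(B-1) := sum_npos s hs B
  have hbadcard' : bad.card ≤ s * (2*s)^(B-1) := by
    have : bad.card * k ≤ (s * (2*s)^(B-1)) * k := by
      calc bad.card * k ≤ B * (2*s)^(B-1) := hbadcard
        _ = (s * (2*s)^(B-1)) * k := by rw [hB]; ring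
    exact Nat.le_of_mul_le_mul_right this (by omega)
  have hgoodcard : s * (2*s)^(B-1) ≤ good.card := by
    have htot : good.card + bad.card = (2*s)^B := by
      rw [hgood, hbad]
      rw [Finset.card_filter_add_card_filter_not]
      rw [Finset.card_univ, Fintype.card_fun, Fintype.card_fin, Fintype.card_fin]
    have hpow : (2*s)^B = 2 * (s * (2*s)^(B-1)) := by
      conv_lhs => rw [show B = (B-1)+1 by omega]
      rw [pow_succ]
      ring
    set Q := s * (2*s)^(B-1) with hQ
    omega
  have hsum : (good.card) * B ≤ ∑ σ : Fin B → Fin (2*s), Nact s B k σ := by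
    calc good.card * B = ∑ _σ ∈ good, B := by rw [Finset.sum_const, smul_eq_mul]
      _ = ∑ σ ∈ good, Nact s B k σ := by
          refine Finset.sum_congr rfl (fun σ hσ => ?_)
          rw [hgood, Finset.mem_filter] at hσ
          exact (Nact_full s B k σ hσ.2).symm
      _ ≤ ∑ σ : Fin B → Fin (2*s), Nact s B k σ :=
          Finset.sum_le_sum_of_subset (Finset.filter_subset _ _)
  calc B * (s * (2*s)^(B-1)) ≤ B * good.card := Nat.mul_le_mul_left B hgoodcard
    _ = good.card * B := Nat.mul_comm _ _
    _ ≤ _ := hsum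

end ATLB
namespace ATLB
variable {X : Type*}

lemma Ex_const_mul {α : Type*} (p : PMF α) (c : ℝ≥0∞) (f : α → ℝ≥0∞) :
    Ex p (fun a => c * f a) = c * Ex p f := by
  unfold Ex
  rw [← ENNReal.tsum_mul_left]; congr 1; funext a; ring

lemma sum_split_zero {s : ℕ} (hs : 1 ≤ s) {M : Type*} [AddCommMonoid M]
    (g : Fin (2*s) → M) (vpos vneg : M)
    (h0 : ∀ c : Fin (2*s), (c:ℕ) = 0 → g c = vpos)
    (h1 : ∀ c : Fin (2*s), (c:ℕ) ≠ 0 → g c = vneg) :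
    ∑ c : Fin (2*s), g c = vpos + (2*s-1) • vneg := by
  haveI : NeZero (2*s) := ⟨by omega⟩
  rw [← Finset.add_sum_erase _ g (Finset.mem_univ (0 : Fin (2*s)))]
  congr 1
  · exact h0 0 (by simp)
  · rw [Finset.sum_congr rfl (fun c hc => h1 c (fun hcv => by
      rw [Finset.mem_erase] at hc
      exact hc.1 (Fin.ext (by simpa using hcv))))]
    rw [Finset.sum_const, Finset.card_erase_of_mem (Finset.mem_univ _), Finset.card_univ,
      Fintype.card_fin]

/-- Lower bound for one block followed by the recursive continuation. -/
lemma branch_bound (A : List (X × Option Bool) → X → PMF Bool) {s : ℕ} (hs : 1 ≤ s)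
    {d : ℕ} (Hs : Set (X → Bool)) (ws : ℕ) (hsub : ALShatter Hs ws d) (xr : X) (yy : Bool)
    (hlab : ∀ σ' : Fin d → Fin (2*s), (adv s d Hs ws hsub xr σ').2 xr = yy)
    (st : List (X × Option Bool) × ℕ)
    (main_d : ∀ st' : List (X × Option Bool) × ℕ,
      ((2*s : ℕ) : ℝ≥0∞)^d * (st'.2 : ℝ≥0∞)
          + 2⁻¹ * ∑ σ' : Fin d → Fin (2*s), (Nact s d ws σ' : ℝ≥0∞)
        ≤ ∑ σ' : Fin d → Fin (2*s),
            Ex (runFrom A (adv s d Hs ws hsub xr σ').1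
                  (fun t => (adv s d Hs ws hsub xr σ').2 ((adv s d Hs ws hsub xr σ').1 t))
                  st' (d*s)) (fun s' => (s'.2 : ℝ≥0∞))) :
    ((2*s : ℕ) : ℝ≥0∞)^d *
        ((st.2 : ℝ≥0∞) + (if yy then (s : ℝ≥0∞) *
            (∏ j ∈ Finset.range s, (A (st.1 ++ List.replicate j (xr, none)) xr) false)
          else (1 - ∏ j ∈ Finset.range s, (A (st.1 ++ List.replicate j (xr, none)) xr) false)))
      + 2⁻¹ * ∑ σ' : Fin d → Fin (2*s), (Nact s d ws σ' : ℝ≥0∞)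
      ≤ ∑ σ' : Fin d → Fin (2*s),
          Ex (runFrom A
               (fun t => if t < s then xr else (adv s d Hs ws hsub xr σ').1 (t - s))
               (fun t => (adv s d Hs ws hsub xr σ').2
                  (if t < s then xr else (adv s d Hs ws hsub xr σ').1 (t - s)))
               st (s + d*s)) (fun s' => (s'.2 : ℝ≥0∞)) := by
  classical
  -- rewrite each run as block then continuation
  have hstep : ∀ σ' : Fin d → Fin (2*s),
      Ex (runFrom A
           (fun t => if t < s then xr else (adv s d Hs ws hsub xr σ').1 (t - s))
           (fun t => (adv s d Hs ws hsub xr σ').2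
              (if t < s then xr else (adv s d Hs ws hsub xr σ').1 (t - s)))
           st (s + d*s)) (fun s' => (s'.2 : ℝ≥0∞))
      = Ex (runFrom A (fun _ => xr) (fun _ => yy) st s)
          (fun st' => Ex (runFrom A (adv s d Hs ws hsub xr σ').1
              (fun t => (adv s d Hs ws hsub xr σ').2 ((adv s d Hs ws hsub xr σ').1 t))
              st' (d*s)) (fun s' => (s'.2 : ℝ≥0∞))) := by
    intro σ'
    rw [runFrom_add, Ex_bind]
    congr 1
    · apply runFrom_congr
      · intro t ht; rw [if_pos ht]
      · intro t ht; rw [if_pos ht]; exact hlab σ'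
    · funext st'
      congr 1
      apply runFrom_congr
      · intro t _
        rw [if_neg (by omega : ¬ (s + t < s)), Nat.add_sub_cancel_left]
      · intro t _
        rw [if_neg (by omega : ¬ (s + t < s)), Nat.add_sub_cancel_left]
  calc ((2*s : ℕ) : ℝ≥0∞)^d *
        ((st.2 : ℝ≥0∞) + (if yy then (s : ℝ≥0∞) *
            (∏ j ∈ Finset.range s, (A (st.1 ++ List.replicate j (xr, none)) xr) false)
          else (1 - ∏ j ∈ Finset.range s, (A (st.1 ++ List.replicate j (xr, none)) xr) false)))
      + 2⁻¹ * ∑ σ' : Fin d → Fin (2*s), (Nact s d ws σ' : ℝ≥0∞)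
      ≤ ((2*s : ℕ) : ℝ≥0∞)^d *
          Ex (runFrom A (fun _ => xr) (fun _ => yy) st s) (fun s' => (s'.2 : ℝ≥0∞))
        + 2⁻¹ * ∑ σ' : Fin d → Fin (2*s), (Nact s d ws σ' : ℝ≥0∞) := by
          apply add_le_add_left
          apply mul_le_mul_right
          cases yy
          · simpa using Ex_neg_block A xr st s
          · simpa using Ex_pos_block A xr st s
    _ = Ex (runFrom A (fun _ => xr) (fun _ => yy) st s)
          (fun st' => ((2*s : ℕ) : ℝ≥0∞)^d * (st'.2 : ℝ≥0∞)
            + 2⁻¹ * ∑ σ' : Fin d → Fin (2*s), (Nact s d ws σ' : ℝ≥0∞)) := by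
          rw [Ex_add, Ex_const, Ex_const_mul]
    _ ≤ Ex (runFrom A (fun _ => xr) (fun _ => yy) st s)
          (fun st' => ∑ σ' : Fin d → Fin (2*s),
            Ex (runFrom A (adv s d Hs ws hsub xr σ').1
              (fun t => (adv s d Hs ws hsub xr σ').2 ((adv s d Hs ws hsub xr σ').1 t))
              st' (d*s)) (fun s' => (s'.2 : ℝ≥0∞))) := by
          exact Ex_mono_support (fun st' _ => main_d st')
    _ = ∑ σ' : Fin d → Fin (2*s),
          Ex (runFrom A (fun _ => xr) (fun _ => yy) st s)
            (fun st' => Ex (runFrom A (adv s d Hs ws hsub xr σ').1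
              (fun t => (adv s d Hs ws hsub xr σ').2 ((adv s d Hs ws hsub xr σ').1 t))
              st' (d*s)) (fun s' => (s'.2 : ℝ≥0∞))) := by
          rw [Ex_sum]
    _ = _ := by
          refine Finset.sum_congr rfl (fun σ' _ => ?_)
          rw [hstep σ']

end ATLB
namespace ATLB
variable {X : Type*}

lemma main_bound (A : List (X × Option Bool) → X → PMF Bool) {s : ℕ} (hs : 1 ≤ s) :
    ∀ (d : ℕ) (H : Set (X → Bool)) (w : ℕ) (hsh : ALShatter H w d) (x₀ : X)
      (st : List (X × Option Bool) × ℕ),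
      ((2*s : ℕ) : ℝ≥0∞)^d * (st.2 : ℝ≥0∞)
          + 2⁻¹ * ∑ σ : Fin d → Fin (2*s), (Nact s d w σ : ℝ≥0∞)
        ≤ ∑ σ : Fin d → Fin (2*s),
            Ex (runFrom A (adv s d H w hsh x₀ σ).1
                  (fun t => (adv s d H w hsh x₀ σ).2 ((adv s d H w hsh x₀ σ).1 t))
                  st (d*s)) (fun s' => (s'.2 : ℝ≥0∞)) := by
  intro d
  induction d with
  | zero =>
      intro H w hsh x₀ st
      have h1 : ∀ σ : Fin 0 → Fin (2*s),
          Ex (runFrom A (adv s 0 H w hsh x₀ σ).1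
              (fun t => (adv s 0 H w hsh x₀ σ).2 ((adv s 0 H w hsh x₀ σ).1 t))
              st (0*s)) (fun s' => (s'.2 : ℝ≥0∞)) = (st.2 : ℝ≥0∞) := by
        intro σ
        rw [Nat.zero_mul]
        simp [runFrom, Ex_pure]
      have hcard : Fintype.card (Fin 0 → Fin (2*s)) = 1 := by
        rw [Fintype.card_fun]; simp
      rw [Finset.sum_congr rfl (fun σ _ => h1 σ), Finset.sum_const, Finset.card_univ, hcard,
        one_smul]
      have h2 : ∀ σ : Fin 0 → Fin (2*s), (Nact s 0 w σ : ℝ≥0∞) = 0 := fun σ => by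
        simp [Nact]
      rw [Finset.sum_congr rfl (fun σ _ => h2 σ), Finset.sum_const, smul_zero]
      simp
  | succ d ih =>
      intro H w hsh x₀ st
      cases w with
      | zero =>
          have h2 : ∀ σ : Fin (d+1) → Fin (2*s), (Nact s (d+1) 0 σ : ℝ≥0∞) = 0 := fun σ => by
            simp [Nact]
          rw [Finset.sum_congr rfl (fun σ _ => h2 σ), Finset.sum_const, smul_zero, mul_zero,
            add_zero]
          calc ((2*s : ℕ) : ℝ≥0∞)^(d+1) * (st.2 : ℝ≥0∞)
              = ∑ _σ : Fin (d+1) → Fin (2*s), (st.2 : ℝ≥0∞) := by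
                rw [Finset.sum_const, Finset.card_univ, Fintype.card_fun, Fintype.card_fin,
                  Fintype.card_fin, nsmul_eq_mul, Nat.cast_pow]
            _ ≤ _ := Finset.sum_le_sum (fun σ _ => Ex_count_ge A _ _ st _)
      | succ w =>
          haveI : NeZero (2*s) := ⟨by omega⟩
          -- abbreviations
          have hmul : (d+1)*s = s + d*s := by ring
          set a : ℝ≥0∞ :=
            ∏ j ∈ Finset.range s, (A (st.1 ++ List.replicate j (advx hsh, none)) (advx hsh)) false
            with ha
          have ha1 : a ≤ 1 :=
            Finset.prod_le_one (fun _ _ => zero_le) (fun j _ => PMF.coe_le_one _ _)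
          -- split the main sum
          have hsplit : ∑ σ : Fin (d+1) → Fin (2*s),
                Ex (runFrom A (adv s (d+1) H (w+1) hsh x₀ σ).1
                      (fun t => (adv s (d+1) H (w+1) hsh x₀ σ).2
                        ((adv s (d+1) H (w+1) hsh x₀ σ).1 t))
                      st ((d+1)*s)) (fun s' => (s'.2 : ℝ≥0∞))
              = (∑ σ' : Fin d → Fin (2*s),
                  Ex (runFrom A
                       (fun t => if t < s then advx hsh
                          else (adv s d {h | h ∈ H ∧ h (advx hsh) = true} w (advx_specR hsh)
                            (advx hsh) σ').1 (t - s))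
                       (fun t => (adv s d {h | h ∈ H ∧ h (advx hsh) = true} w (advx_specR hsh)
                            (advx hsh) σ').2
                          (if t < s then advx hsh
                            else (adv s d {h | h ∈ H ∧ h (advx hsh) = true} w (advx_specR hsh)
                              (advx hsh) σ').1 (t - s)))
                       st (s + d*s)) (fun s' => (s'.2 : ℝ≥0∞)))
                + (2*s-1) • (∑ σ' : Fin d → Fin (2*s),
                  Ex (runFrom A
                       (fun t => if t < s then advx hsh
                          else (adv s d {h | h ∈ H ∧ h (advx hsh) = false} (w+1) (advx_specL hsh)
                            (advx hsh) σ').1 (t - s))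
                       (fun t => (adv s d {h | h ∈ H ∧ h (advx hsh) = false} (w+1) (advx_specL hsh)
                            (advx hsh) σ').2
                          (if t < s then advx hsh
                            else (adv s d {h | h ∈ H ∧ h (advx hsh) = false} (w+1) (advx_specL hsh)
                              (advx hsh) σ').1 (t - s)))
                       st (s + d*s)) (fun s' => (s'.2 : ℝ≥0∞))) := by
            rw [sum_cube]
            refine sum_split_zero hs _ _ _ ?_ ?_
            · intro c hc
              refine Finset.sum_congr rfl (fun σ' _ => ?_)
              rw [hmul, adv_eq_pos s hsh x₀ (Fin.cons c σ') (by rwa [Fin.cons_zero]),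
                cons_comp_succ]
            · intro c hc
              refine Finset.sum_congr rfl (fun σ' _ => ?_)
              rw [hmul, adv_eq_neg s hsh x₀ (Fin.cons c σ') (by rwa [Fin.cons_zero]),
                cons_comp_succ]
          -- split the Nact sum
          have hN : ∑ σ : Fin (d+1) → Fin (2*s), (Nact s (d+1) (w+1) σ : ℝ≥0∞)
              = ((((2*s)^d : ℕ) : ℝ≥0∞)
                  + ∑ σ' : Fin d → Fin (2*s), (Nact s d w σ' : ℝ≥0∞))
                + (2*s-1) • ((((2*s)^d : ℕ) : ℝ≥0∞)
                  + ∑ σ' : Fin d → Fin (2*s), (Nact s d (w+1) σ' : ℝ≥0∞)) := by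
            rw [sum_cube]
            refine sum_split_zero hs _ _ _ ?_ ?_
            · intro c hc
              have h3 : ∀ σ' : Fin d → Fin (2*s),
                  (Nact s (d+1) (w+1) (Fin.cons c σ') : ℝ≥0∞) = 1 + (Nact s d w σ' : ℝ≥0∞) := by
                intro σ'
                simp only [Nact, Fin.cons_zero, if_pos hc, cons_comp_succ]
                push_cast
                ring
              rw [Finset.sum_congr rfl (fun σ' _ => h3 σ'), Finset.sum_add_distrib,
                Finset.sum_const, Finset.card_univ, Fintype.card_fun, Fintype.card_fin,
                Fintype.card_fin, nsmul_eq_mul, mul_one]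
            · intro c hc
              have h3 : ∀ σ' : Fin d → Fin (2*s),
                  (Nact s (d+1) (w+1) (Fin.cons c σ') : ℝ≥0∞)
                    = 1 + (Nact s d (w+1) σ' : ℝ≥0∞) := by
                intro σ'
                simp only [Nact, Fin.cons_zero, if_neg hc, cons_comp_succ]
                push_cast
                ring
              rw [Finset.sum_congr rfl (fun σ' _ => h3 σ'), Finset.sum_add_distrib,
                Finset.sum_const, Finset.card_univ, Fintype.card_fun, Fintype.card_fin,
                Fintype.card_fin, nsmul_eq_mul, mul_one]
          -- the two branch bounds
          have hbT := branch_bound A hs {h | h ∈ H ∧ h (advx hsh) = true} w (advx_specR hsh)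
            (advx hsh) true
            (fun σ' => (adv_mem s d {h | h ∈ H ∧ h (advx hsh) = true} w (advx_specR hsh)
              (advx hsh) σ').2)
            st (fun st' => ih {h | h ∈ H ∧ h (advx hsh) = true} w (advx_specR hsh) (advx hsh) st')
          have hbF := branch_bound A hs {h | h ∈ H ∧ h (advx hsh) = false} (w+1) (advx_specL hsh)
            (advx hsh) false
            (fun σ' => (adv_mem s d {h | h ∈ H ∧ h (advx hsh) = false} (w+1) (advx_specL hsh)
              (advx hsh) σ').2)
            st (fun st' => ih {h | h ∈ H ∧ h (advx hsh) = false} (w+1) (advx_specL hsh)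
              (advx hsh) st')
          simp only [if_true, Bool.false_eq_true, if_false] at hbT hbF
          rw [hsplit, hN]
          -- now pure arithmetic
          set P : ℝ≥0∞ := ((2*s : ℕ) : ℝ≥0∞)^d with hP
          set m : ℝ≥0∞ := ((2*s-1 : ℕ) : ℝ≥0∞) with hm
          set NT : ℝ≥0∞ := ∑ σ' : Fin d → Fin (2*s), (Nact s d w σ' : ℝ≥0∞) with hNT
          set NF : ℝ≥0∞ := ∑ σ' : Fin d → Fin (2*s), (Nact s d (w+1) σ' : ℝ≥0∞) with hNF
          have hcastpow : ((((2*s)^d : ℕ)) : ℝ≥0∞) = P := by rw [hP, Nat.cast_pow]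
          have hm1 : (1 : ℝ≥0∞) + m = ((2*s : ℕ) : ℝ≥0∞) := by
            rw [hm]
            rw [← Nat.cast_one, ← Nat.cast_add]
            congr 1
            omega
          have hsm : (s : ℝ≥0∞) ≤ m := by
            rw [hm]
            exact_mod_cast Nat.cast_le.2 (by omega : s ≤ 2*s-1)
          have key : (s : ℝ≥0∞) ≤ (s : ℝ≥0∞) * a + m * (1 - a) := by
            have h4 : a + (1 - a) = 1 := by
              rw [add_comm]
              exact tsub_add_cancel_of_le ha1
            calc (s : ℝ≥0∞) = (s : ℝ≥0∞) * (a + (1 - a)) := by rw [h4, mul_one]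
              _ = (s : ℝ≥0∞) * a + (s : ℝ≥0∞) * (1 - a) := by ring
              _ ≤ (s : ℝ≥0∞) * a + m * (1 - a) :=
                  add_le_add_right (mul_le_mul_left hsm _) _
          have htwo : (2⁻¹ : ℝ≥0∞) * ((1 + m) * P) = (s : ℝ≥0∞) * P := by
            rw [hm1]
            have : ((2*s : ℕ) : ℝ≥0∞) = 2 * (s : ℝ≥0∞) := by push_cast; ring
            rw [this, ← mul_assoc, ← mul_assoc, ENNReal.inv_mul_cancel (by norm_num)
              (by norm_num), one_mul]
          have hpow1 : ((2*s : ℕ) : ℝ≥0∞)^(d+1) = (1 + m) * P := by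
            rw [pow_succ, hm1, mul_comm]
          rw [nsmul_eq_mul, nsmul_eq_mul, hcastpow, hpow1]
          rw [← hm]
          calc (1 + m) * P * (st.2 : ℝ≥0∞) + 2⁻¹ * ((P + NT) + m * (P + NF))
              = ((P * (st.2 : ℝ≥0∞) + 2⁻¹ * NT) + m * (P * (st.2 : ℝ≥0∞) + 2⁻¹ * NF))
                + 2⁻¹ * ((1 + m) * P) := by ring
            _ = ((P * (st.2 : ℝ≥0∞) + 2⁻¹ * NT) + m * (P * (st.2 : ℝ≥0∞) + 2⁻¹ * NF))
                + (s : ℝ≥0∞) * P := by rw [htwo]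
            _ ≤ ((P * (st.2 : ℝ≥0∞) + 2⁻¹ * NT) + m * (P * (st.2 : ℝ≥0∞) + 2⁻¹ * NF))
                + (P * ((s : ℝ≥0∞) * a) + m * (P * (1 - a))) := by
                apply add_le_add_right
                calc (s : ℝ≥0∞) * P ≤ ((s : ℝ≥0∞) * a + m * (1 - a)) * P :=
                      mul_le_mul_left key P
                  _ = P * ((s : ℝ≥0∞) * a) + m * (P * (1 - a)) := by ring
            _ = (P * ((st.2 : ℝ≥0∞) + (s : ℝ≥0∞) * a) + 2⁻¹ * NT)
                + m * (P * ((st.2 : ℝ≥0∞) + (1 - a)) + 2⁻¹ * NF) := by ring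
            _ ≤ _ := add_le_add hbT (mul_le_mul_right hbF m)
end ATLB
namespace ATLB
variable {X : Type*}

lemma Ex_runAT_succ_ge (A : List (X × Option Bool) → X → PMF Bool) (x : ℕ → X) (y : ℕ → Bool)
    (T : ℕ) :
    Ex (runAT A x y T) (fun s' => (s'.2 : ℝ≥0∞))
      ≤ Ex (runAT A x y (T+1)) (fun s' => (s'.2 : ℝ≥0∞)) := by
  rw [runAT, Ex_bind]
  apply Ex_mono_support
  intro st _
  rw [Ex_bind]
  calc (st.2 : ℝ≥0∞) = Ex (A st.1 (x T)) (fun _ => (st.2 : ℝ≥0∞)) := (Ex_const _ _).symm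
    _ ≤ Ex (A st.1 (x T)) (fun b =>
          Ex (PMF.pure (st.1 ++ [(x T, if b then some (y T) else none)],
            st.2 + (if b ≠ y T then 1 else 0))) (fun s' => (s'.2 : ℝ≥0∞))) := by
        apply Ex_mono_support
        intro b _
        rw [Ex_pure]
        exact_mod_cast Nat.cast_le.2 (Nat.le_add_right _ _)

lemma Ex_runAT_mono (A : List (X × Option Bool) → X → PMF Bool) (x : ℕ → X) (y : ℕ → Bool)
    {n T : ℕ} (h : n ≤ T) :
    Ex (runAT A x y n) (fun s' => (s'.2 : ℝ≥0∞))
      ≤ Ex (runAT A x y T) (fun s' => (s'.2 : ℝ≥0∞)) := by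
  induction T, h using Nat.le_induction with
  | base => exact le_rfl
  | succ T hT ih => exact le_trans ih (Ex_runAT_succ_ge A x y T)

end ATLB
namespace ATLB

theorem lower_bound {X : Type*} (H : Set (X → Bool)) (T : ℕ)
    (A : List (X × Option Bool) → X → PMF Bool) (w : ℕ) (hw : 1 ≤ w) :
    ENNReal.ofReal ((1 / 8) * Real.sqrt
        (((min (w : ℕ∞) (min (Ldim H) (T : ℕ∞))).toNat : ℝ) *
          ((min (ALdim H w) (T : ℕ∞)).toNat : ℝ)))
      ≤ ⨆ h ∈ H, ⨆ x : ℕ → X, expMistakes A x (fun t => h (x t)) T := by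
  classical
  set kk : ℕ := (min (w : ℕ∞) (min (Ldim H) (T : ℕ∞))).toNat with hkk
  set mm : ℕ := (min (ALdim H w) (T : ℕ∞)).toNat with hmm
  by_cases hk0 : kk = 0
  · simp only [hk0, Nat.cast_zero, zero_mul, Real.sqrt_zero, mul_zero, ENNReal.ofReal_zero]
    exact zero_le
  by_cases hm0 : mm = 0
  · simp only [hm0, Nat.cast_zero, mul_zero, Real.sqrt_zero, ENNReal.ofReal_zero]
    exact zero_le
  have hk1 : 1 ≤ kk := Nat.one_le_iff_ne_zero.2 hk0
  have hm1 : 1 ≤ mm := Nat.one_le_iff_ne_zero.2 hm0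
  -- extraction of the combinatorial facts
  have hkfin : min (w : ℕ∞) (min (Ldim H) (T : ℕ∞)) ≠ ⊤ :=
    ne_top_of_le_ne_top (ENat.coe_ne_top w) (min_le_left _ _)
  have hmfin : min (ALdim H w) (T : ℕ∞) ≠ ⊤ :=
    ne_top_of_le_ne_top (ENat.coe_ne_top T) (min_le_right _ _)
  have hkcast : (kk : ℕ∞) = min (w : ℕ∞) (min (Ldim H) (T : ℕ∞)) := by
    rw [hkk]; exact ENat.coe_toNat hkfin
  have hmcast : (mm : ℕ∞) = min (ALdim H w) (T : ℕ∞) := by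
    rw [hmm]; exact ENat.coe_toNat hmfin
  have hkw : kk ≤ w := by
    have : (kk : ℕ∞) ≤ (w : ℕ∞) := hkcast ▸ min_le_left _ _
    exact_mod_cast this
  have hkL : (kk : ℕ∞) ≤ Ldim H :=
    hkcast ▸ le_trans (min_le_right _ _) (min_le_left _ _)
  have hkT : kk ≤ T := by
    have : (kk : ℕ∞) ≤ (T : ℕ∞) := hkcast ▸ le_trans (min_le_right _ _) (min_le_right _ _)
    exact_mod_cast this
  have hmA : (mm : ℕ∞) ≤ ALdim H w := hmcast ▸ min_le_left _ _
  have hmT : mm ≤ T := by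
    have : (mm : ℕ∞) ≤ (T : ℕ∞) := hmcast ▸ min_le_right _ _
    exact_mod_cast this
  have hkm : kk ≤ mm := by
    have h1 : (kk : ℕ∞) ≤ ALdim H w :=
      le_aldim (lsh_to_alsh kk H w (lsh_of_le_ldim hk1 hkL))
    have h2 : (kk : ℕ∞) ≤ (mm : ℕ∞) := by
      rw [hmcast]
      exact le_min h1 (by exact_mod_cast hkT)
    exact_mod_cast h2
  -- parameters
  set s : ℕ := Nat.sqrt (mm / kk) with hsdef
  have hs1 : 1 ≤ s := by
    have h1 : 1 ≤ mm / kk := (Nat.le_div_iff_mul_le (by omega)).2 (by omega)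
    calc 1 = Nat.sqrt 1 := by rw [Nat.sqrt_one]
      _ ≤ s := Nat.sqrt_le_sqrt h1
  have hks2 : kk * s * s ≤ mm := by
    calc kk * s * s = kk * (s * s) := by ring
      _ ≤ kk * (mm / kk) := Nat.mul_le_mul_left kk (Nat.sqrt_le (mm / kk))
      _ ≤ mm := Nat.mul_div_le mm kk
  have hm4 : mm < 4 * (kk * (s * s)) := by
    have hq : mm / kk < (s+1) * (s+1) := Nat.lt_succ_sqrt (mm / kk)
    have h5 : kk * (mm / kk) + kk ≤ kk * ((s+1) * (s+1)) := by
      have h6 : (mm / kk) + 1 ≤ (s+1)*(s+1) := hq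
      calc kk * (mm / kk) + kk = kk * ((mm / kk) + 1) := by ring
        _ ≤ kk * ((s+1)*(s+1)) := Nat.mul_le_mul_left kk h6
    have h6 : kk * ((s+1)*(s+1)) ≤ kk * (4*(s*s)) :=
      Nat.mul_le_mul_left kk (by nlinarith)
    have h7 : mm < kk * (mm / kk) + kk := by
      conv_lhs => rw [← Nat.div_add_mod mm kk]
      exact Nat.add_lt_add_left (Nat.mod_lt mm (by omega)) _
    calc mm < kk * (mm / kk) + kk := h7
      _ ≤ kk * ((s+1)*(s+1)) := h5
      _ ≤ kk * (4*(s*s)) := h6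
      _ = 4 * (kk * (s*s)) := by ring
  -- the shattered tree
  have hshm : ALShatter H w mm := alsh_of_le_aldim hm1 hmA
  have hshk : ALShatter H kk mm := alsh_mono_width w kk hkw hshm
  have hshB : ALShatter H kk (kk * s) := by
    refine alsh_mono_depth mm H kk (kk * s) ?_ hshk
    calc kk * s = kk * s * 1 := by ring
      _ ≤ kk * s * s := Nat.mul_le_mul_left (kk*s) hs1
      _ ≤ mm := hks2
  obtain ⟨kpred, hkeq⟩ : ∃ kp, kk = kp + 1 := ⟨kk - 1, by omega⟩
  have hB1 : 1 ≤ kk * s := Nat.one_le_iff_ne_zero.2 (by positivity)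
  have h3 : ALShatter H kk 1 := alsh_mono_depth (kk*s) H kk 1 hB1 hshB
  have h4 : ALShatter H (kpred+1) (0+1) := by rw [← hkeq]; exact h3
  set x₀ : X := (alshS h4).choose with hx₀
  -- apply the main bound
  have main := main_bound A hs1 (kk*s) H kk hshB x₀ ([], 0)
  simp only [Nat.cast_zero, mul_zero, zero_add] at main
  -- upper bound each summand by the supremum
  have hE : ∀ σ : Fin (kk*s) → Fin (2*s),
      Ex (runFrom A (adv s (kk*s) H kk hshB x₀ σ).1
            (fun t => (adv s (kk*s) H kk hshB x₀ σ).2 ((adv s (kk*s) H kk hshB x₀ σ).1 t))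
            ([], 0) ((kk*s)*s)) (fun s' => (s'.2 : ℝ≥0∞))
        ≤ ⨆ h ∈ H, ⨆ x : ℕ → X, expMistakes A x (fun t => h (x t)) T := by
    intro σ
    rw [← runAT_eq_runFrom]
    refine le_trans (Ex_runAT_mono A _ _ (le_trans hks2 hmT : kk*s*s ≤ T)) ?_
    exact le_iSup₂_of_le ((adv s (kk*s) H kk hshB x₀ σ).2) (adv_mem s (kk*s) H kk hshB x₀ σ)
      (le_iSup_of_le ((adv s (kk*s) H kk hshB x₀ σ).1) (le_of_eq rfl))
  have hsum1 : ∑ σ : Fin (kk*s) → Fin (2*s),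
      Ex (runFrom A (adv s (kk*s) H kk hshB x₀ σ).1
            (fun t => (adv s (kk*s) H kk hshB x₀ σ).2 ((adv s (kk*s) H kk hshB x₀ σ).1 t))
            ([], 0) ((kk*s)*s)) (fun s' => (s'.2 : ℝ≥0∞))
      ≤ (((2*s)^(kk*s) : ℕ) : ℝ≥0∞) *
          ⨆ h ∈ H, ⨆ x : ℕ → X, expMistakes A x (fun t => h (x t)) T := by
    refine le_trans (Finset.sum_le_card_nsmul _ _ _ (fun σ _ => hE σ)) ?_
    rw [Finset.card_univ, Fintype.card_fun, Fintype.card_fin, Fintype.card_fin, nsmul_eq_mul]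
  have hsum2 : 2⁻¹ * ((((kk*s) * (s * (2*s)^(kk*s-1)) : ℕ)) : ℝ≥0∞)
      ≤ ∑ σ : Fin (kk*s) → Fin (2*s),
        Ex (runFrom A (adv s (kk*s) H kk hshB x₀ σ).1
              (fun t => (adv s (kk*s) H kk hshB x₀ σ).2 ((adv s (kk*s) H kk hshB x₀ σ).1 t))
              ([], 0) ((kk*s)*s)) (fun s' => (s'.2 : ℝ≥0∞)) := by
    refine le_trans ?_ main
    apply mul_le_mul_right
    calc ((((kk*s) * (s * (2*s)^(kk*s-1)) : ℕ)) : ℝ≥0∞)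
        ≤ ((∑ σ : Fin (kk*s) → Fin (2*s), Nact s (kk*s) kk σ : ℕ) : ℝ≥0∞) :=
          Nat.cast_le.2 (sum_Nact_ge s kk hs1 hk1)
      _ = ∑ σ : Fin (kk*s) → Fin (2*s), (Nact s (kk*s) kk σ : ℝ≥0∞) := Nat.cast_sum _ _
  -- numeric comparison
  have h24 : (2 : ℝ≥0∞) * 4⁻¹ = 2⁻¹ := by
    rw [show (4:ℝ≥0∞) = 2*2 by norm_num,
      ENNReal.mul_inv (Or.inl (by norm_num)) (Or.inl ENNReal.ofNat_ne_top), ← mul_assoc,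
      ENNReal.mul_inv_cancel (by norm_num) ENNReal.ofNat_ne_top, one_mul]
  have hofreal : ENNReal.ofReal ((1/8) * Real.sqrt ((kk:ℝ) * (mm:ℝ)))
      ≤ (((kk*s : ℕ)) : ℝ≥0∞) * 4⁻¹ := by
    have hsq : Real.sqrt ((kk:ℝ) * (mm:ℝ)) ≤ 2 * ((kk*s : ℕ) : ℝ) := by
      have h5 : ((kk:ℝ) * (mm:ℝ)) ≤ (2 * ((kk*s : ℕ) : ℝ))^2 := by
        push_cast
        have hmr : (mm : ℝ) ≤ 4 * ((kk:ℝ) * ((s:ℝ)*(s:ℝ))) := by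
          exact_mod_cast le_of_lt (by exact_mod_cast hm4)
        have hkr : (0:ℝ) ≤ (kk:ℝ) := Nat.cast_nonneg kk
        nlinarith [hkr, hmr, mul_le_mul_of_nonneg_left hmr hkr]
      calc Real.sqrt ((kk:ℝ) * (mm:ℝ)) ≤ Real.sqrt ((2 * ((kk*s : ℕ) : ℝ))^2) :=
            Real.sqrt_le_sqrt h5
        _ = 2 * ((kk*s : ℕ) : ℝ) := Real.sqrt_sq (by positivity)
    calc ENNReal.ofReal ((1/8) * Real.sqrt ((kk:ℝ) * (mm:ℝ)))
        ≤ ENNReal.ofReal (((kk*s : ℕ) : ℝ) / 4) := by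
          apply ENNReal.ofReal_le_ofReal
          nlinarith [hsq]
      _ = (((kk*s : ℕ)) : ℝ≥0∞) * 4⁻¹ := by
          rw [ENNReal.ofReal_div_of_pos (by norm_num), ENNReal.ofReal_natCast]
          rw [show ((4:ℝ)) = ((4:ℕ):ℝ) by norm_num, ENNReal.ofReal_natCast]
          rw [div_eq_mul_inv]
          norm_num
  -- cancel the normalization factor
  have hQ0 : (((2*s)^(kk*s) : ℕ) : ℝ≥0∞) ≠ 0 := by
    rw [Ne, Nat.cast_eq_zero]
    positivity
  have hQt : (((2*s)^(kk*s) : ℕ) : ℝ≥0∞) ≠ ⊤ := ENNReal.natCast_ne_top _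
  rw [← ENNReal.mul_le_mul_iff_right hQ0 hQt]
  have hQexp : (((2*s)^(kk*s) : ℕ) : ℝ≥0∞)
      = (2 * (s:ℝ≥0∞)) * (((2*s)^(kk*s-1) : ℕ) : ℝ≥0∞) := by
    rw [show (kk*s) = (kk*s-1)+1 by omega, pow_succ]
    push_cast
    ring
  calc (((2*s)^(kk*s) : ℕ) : ℝ≥0∞) *
        ENNReal.ofReal ((1/8) * Real.sqrt ((kk:ℝ) * (mm:ℝ)))
      ≤ (((2*s)^(kk*s) : ℕ) : ℝ≥0∞) * ((((kk*s : ℕ)) : ℝ≥0∞) * 4⁻¹) :=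
        mul_le_mul_right hofreal _
    _ = 2⁻¹ * ((((kk*s) * (s * (2*s)^(kk*s-1)) : ℕ)) : ℝ≥0∞) := by
        rw [hQexp]
        calc (2 * (s:ℝ≥0∞)) * (((2*s)^(kk*s-1) : ℕ) : ℝ≥0∞) * ((((kk*s : ℕ)) : ℝ≥0∞) * 4⁻¹)
            = (2 * 4⁻¹) * ((s:ℝ≥0∞) * (((2*s)^(kk*s-1) : ℕ) : ℝ≥0∞) * (((kk*s : ℕ)) : ℝ≥0∞)) := by
              ring
          _ = 2⁻¹ * ((s:ℝ≥0∞) * (((2*s)^(kk*s-1) : ℕ) : ℝ≥0∞) * (((kk*s : ℕ)) : ℝ≥0∞)) := by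
              rw [h24]
          _ = 2⁻¹ * ((((kk*s) * (s * (2*s)^(kk*s-1)) : ℕ)) : ℝ≥0∞) := by
              push_cast
              ring
    _ ≤ ∑ σ : Fin (kk*s) → Fin (2*s),
          Ex (runFrom A (adv s (kk*s) H kk hshB x₀ σ).1
              (fun t => (adv s (kk*s) H kk hshB x₀ σ).2 ((adv s (kk*s) H kk hshB x₀ σ).1 t))
              ([], 0) ((kk*s)*s)) (fun s' => (s'.2 : ℝ≥0∞)) := hsum2
    _ ≤ _ := hsum1

end ATLB

/-- minimax realizable lower bound for apple tasting. For every randomized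
apple-tasting learner A and every width w, the worst-case (over hypotheses h ∈ H and
streams x) expected number of mistakes over T rounds is at least
(1/8)·√(min{w, L(H), T} · min{AL_w(H), T}); hence it is at least
(1/8)·sup_w √(min{w, L(H), T} · min{AL_w(H), T}). -/


theorem apple_tasting_realizable_lower_bound {X : Type*} (H : Set (X → Bool)) (T : ℕ)
    (A : List (X × Option Bool) → X → PMF Bool) (w : ℕ) (hw : 1 ≤ w) :
    ENNReal.ofReal ((1 / 8) * Real.sqrt
        (((min (w : ℕ∞) (min (Ldim H) (T : ℕ∞))).toNat : ℝ) *
          ((min (ALdim H w) (T : ℕ∞)).toNat : ℝ)))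
      ≤ ⨆ h ∈ H, ⨆ x : ℕ → X, expMistakes A x (fun t => h (x t)) T :=
  ATLB.lower_bound H T A w hw
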